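/- Let f : [a, b] → ℝ be differentiable with f' monotone and |f'(t)| ≥ M > 0 on [a, b]. Then |∫_a^b e^{i f(t)} dt| ≤ C/M for some absolute constant C (one may take C = 4). -/

import Mathlib

open Real MeasureTheory Set

lemma norm_exp_I_mul_real (x : ℝ) : ‖Complex.exp (Complex.I * (x : ℂ))‖ = 1 := by
  rw [mul_comm]
  exact Complex.norm_exp_ofReal_mul_I x

lemma vdc_key (a b : ℝ) (hab : a < b) (f f' : ℝ → ℝ)
    (hf : ∀ t ∈ Set.Icc a b, HasDerivAt f (f' t) t)
    (hmono : MonotoneOn f' (Set.Icc a b) ∨ AntitoneOn f' (Set.Icc a b))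
    (M : ℝ) (hM : 0 < M) (hpos : ∀ t ∈ Set.Icc a b, M ≤ f' t) :
    ‖∫ t in a..b, Complex.exp (Complex.I * (f t : ℂ))‖ ≤ 2 / M := by
  -- clamp to [a,b]
  set p : ℝ → ℝ := fun t => max a (min b t) with hp
  have hpmem : ∀ t, p t ∈ Icc a b := fun t => ⟨le_max_left _ _, max_le hab.le (min_le_left _ _)⟩
  have hpid : ∀ t ∈ Icc a b, p t = t := by
    rintro t ⟨h1, h2⟩
    simp only [hp, min_eq_right h2, max_eq_right h1]
  have hpm : Monotone p := fun s t hst => max_le_max le_rfl (min_le_min le_rfl hst)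
  have hpc : Continuous p := continuous_const.max (continuous_const.min continuous_id)
  set G : ℝ → ℝ := fun t => f' (p t) with hGdef
  set F : ℝ → ℝ := fun t => f (p t) with hFdef
  have hGid : ∀ t ∈ Icc a b, G t = f' t := fun t ht => by rw [hGdef]; simp [hpid t ht]
  have hFid : ∀ t ∈ Icc a b, F t = f t := fun t ht => by rw [hFdef]; simp [hpid t ht]
  have hGM : ∀ t, M ≤ G t := fun t => hpos _ (hpmem t)
  set C : ℝ := max (f' a) (f' b) with hCdef
  have hGC : ∀ t, G t ≤ C := by
    intro t
    rcases hmono with h | h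
    · exact le_trans (h (hpmem t) (right_mem_Icc.2 hab.le) (hpmem t).2) (le_max_right _ _)
    · exact le_trans (h (left_mem_Icc.2 hab.le) (hpmem t) (hpmem t).1) (le_max_left _ _)
  have hC : (0:ℝ) < C := lt_of_lt_of_le hM (le_trans (hGM a) (hGC a))
  have hGmono : Monotone G ∨ Antitone G := by
    rcases hmono with h | h
    · exact Or.inl fun s t hst => h (hpmem s) (hpmem t) (hpm hst)
    · exact Or.inr fun s t hst => h (hpmem s) (hpmem t) (hpm hst)
  have hGmeas : Measurable G := by
    rcases hGmono with h | h
    · exact h.measurable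
    · exact h.measurable
  have hfc : ContinuousOn f (Icc a b) := fun t ht => (hf t ht).continuousAt.continuousWithinAt
  have hFc : Continuous F := hfc.comp_continuous hpc hpmem
  set h : ℝ → ℝ := fun t => (G t)⁻¹ with hhdef
  have hGpos : ∀ t, (0:ℝ) < G t := fun t => lt_of_lt_of_le hM (hGM t)
  have hh1 : ∀ t, 0 < h t := fun t => inv_pos.2 (hGpos t)
  have hh2 : ∀ t, h t ≤ M⁻¹ := fun t => inv_anti₀ hM (hGM t)
  set φ : ℝ → ℂ := fun t => (G t : ℂ) * Complex.exp (Complex.I * (F t : ℂ)) with hφdef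
  have hexpc : Continuous fun t => Complex.exp (Complex.I * (F t : ℂ)) :=
    Complex.continuous_exp.comp (continuous_const.mul (Complex.continuous_ofReal.comp hFc))
  have hφm : Measurable φ := (Complex.measurable_ofReal.comp hGmeas).mul hexpc.measurable
  have hφnorm : ∀ t, ‖φ t‖ ≤ C := by
    intro t
    rw [hφdef]
    simp only [norm_mul, Complex.norm_real, norm_exp_I_mul_real, mul_one]
    rw [Real.norm_eq_abs, abs_of_pos (hGpos t)]
    exact hGC t
  -- FTC bound on subintervals
  have hφint : ∀ c d : ℝ, IntegrableOn φ (Ioc c d) := by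
    intro c d
    apply Integrable.mono' (g := fun _ => C)
    · exact integrableOn_const measure_Ioc_lt_top.ne
    · exact hφm.aestronglyMeasurable.restrict
    · exact Filter.Eventually.of_forall fun t => hφnorm t
  have hinner : ∀ c d : ℝ, a ≤ c → c ≤ d → d ≤ b → ‖∫ t in c..d, φ t‖ ≤ 2 := by
    intro c d hac hcd hdb
    set ψ : ℝ → ℂ := fun t => Complex.exp (Complex.I * (F t : ℂ)) / Complex.I with hψdef
    have hderiv : ∀ x ∈ Ioo c d, HasDerivAt ψ (φ x) x := by
      intro x hx
      have hxa : x ∈ Ioo a b := ⟨lt_of_le_of_lt hac hx.1, lt_of_lt_of_le hx.2 hdb⟩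
      have hxm : x ∈ Icc a b := Ioo_subset_Icc_self hxa
      have h1 : HasDerivAt (fun t => ((f t : ℂ))) (f' x : ℂ) x := (hf x hxm).ofReal_comp
      have h2 : HasDerivAt (fun t => Complex.I * (f t : ℂ)) (Complex.I * (f' x : ℂ)) x :=
        h1.const_mul Complex.I
      have h3 := h2.cexp
      have h4 := h3.div_const Complex.I
      have heq : ψ =ᶠ[nhds x] fun t => Complex.exp (Complex.I * (f t : ℂ)) / Complex.I := by
        filter_upwards [Ioo_mem_nhds hxa.1 hxa.2] with t ht
        rw [hψdef]
        simp only [hFid t (Ioo_subset_Icc_self ht)]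
      have h5 := h4.congr_of_eventuallyEq heq
      have hval : φ x = Complex.exp (Complex.I * (f x : ℂ)) * (Complex.I * (f' x : ℂ)) / Complex.I := by
        show (G x : ℂ) * Complex.exp (Complex.I * (F x : ℂ)) = _
        rw [hFid x hxm, hGid x hxm]
        rw [eq_div_iff Complex.I_ne_zero]
        ring
      rw [hval]
      exact h5
    have hcont : ContinuousOn ψ (Icc c d) := (hexpc.div_const Complex.I).continuousOn
    have hii : IntervalIntegrable φ volume c d := by
      rw [intervalIntegrable_iff_integrableOn_Ioc_of_le hcd]
      exact hφint c d
    rw [intervalIntegral.integral_eq_sub_of_hasDerivAt_of_le hcd hcont hderiv hii]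
    rw [hψdef]
    rw [div_sub_div_same, norm_div, Complex.norm_I, div_one]
    calc ‖Complex.exp (Complex.I * (F d:ℂ)) - Complex.exp (Complex.I * (F c:ℂ))‖
        ≤ ‖Complex.exp (Complex.I * (F d:ℂ))‖ + ‖Complex.exp (Complex.I * (F c:ℂ))‖ :=
          norm_sub_le _ _
      _ ≤ 2 := by rw [norm_exp_I_mul_real, norm_exp_I_mul_real]; norm_num
  -- superlevel sets
  set T : ℝ → Set ℝ := fun l => {t | l < h t} with hTdef
  have hTmeas : ∀ l, MeasurableSet (T l) := fun l => measurableSet_lt measurable_const hGmeas.inv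
  have hTord : ∀ l, OrdConnected (T l) := by
    intro l
    constructor
    intro x hx z hz y hy
    rcases hGmono with hm | hm
    · exact lt_of_lt_of_le hz (inv_anti₀ (hGpos y) (hm hy.2))
    · exact lt_of_lt_of_le hx (inv_anti₀ (hGpos y) (hm hy.1))
  set K : ℝ → ℝ → ℂ := fun t l => if l < h t then φ t else 0 with hKdef
  -- layer cake identity
  have hlayer : ∀ t : ℝ, Complex.exp (Complex.I * (F t : ℂ)) = ∫ l in Ioc 0 M⁻¹, K t l := by
    intro t
    have : (fun l => K t l) = (Iio (h t)).indicator (fun _ => φ t) := by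
      funext l
      simp [hKdef, Set.indicator_apply, mem_Iio]
    rw [this, integral_indicator measurableSet_Iio,
      Measure.restrict_restrict measurableSet_Iio, setIntegral_const]
    have hset : Iio (h t) ∩ Ioc 0 M⁻¹ = Ioo 0 (h t) := by
      ext l
      simp only [mem_inter_iff, mem_Iio, mem_Ioc, mem_Ioo]
      constructor
      · rintro ⟨h1, h2, h3⟩; exact ⟨h2, h1⟩
      · rintro ⟨h1, h2⟩; exact ⟨h2, h1, le_trans h2.le (hh2 t)⟩
    rw [hset, Real.volume_real_Ioo_of_le (hh1 t).le, sub_zero]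
    show Complex.exp (Complex.I * (F t : ℂ))
        = (G t)⁻¹ • ((G t : ℂ) * Complex.exp (Complex.I * (F t : ℂ)))
    rw [Complex.real_smul, Complex.ofReal_inv, ← mul_assoc,
      inv_mul_cancel₀ (by exact_mod_cast (hGpos t).ne'), one_mul]
  -- integrability on product
  haveI hμfin : IsFiniteMeasure (volume.restrict (Ioc a b)) :=
    ⟨by rw [Measure.restrict_apply_univ]; exact measure_Ioc_lt_top⟩
  haveI hνfin : IsFiniteMeasure (volume.restrict (Ioc (0:ℝ) M⁻¹)) :=
    ⟨by rw [Measure.restrict_apply_univ]; exact measure_Ioc_lt_top⟩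
  have hKint : Integrable (Function.uncurry K)
      ((volume.restrict (Ioc a b)).prod (volume.restrict (Ioc (0:ℝ) M⁻¹))) := by
    apply Integrable.mono' (g := fun _ => C)
    · exact integrable_const C
    · have hS : MeasurableSet {z : ℝ × ℝ | z.2 < h z.1} :=
        measurableSet_lt measurable_snd (hGmeas.inv.comp measurable_fst)
      have : Function.uncurry K = {z : ℝ × ℝ | z.2 < h z.1}.piecewise (fun z => φ z.1)
          (fun _ => 0) := by
        funext z
        simp [Function.uncurry, hKdef, Set.piecewise, mem_setOf_eq]
      rw [this]
      exact ((Measurable.piecewise hS (hφm.comp measurable_fst) measurable_const)).aestronglyMeasurable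
    · apply Filter.Eventually.of_forall
      rintro ⟨t, l⟩
      simp only [Function.uncurry, hKdef]
      split
      · exact hφnorm t
      · simp [hC.le]
  -- swap
  have hswap : ∫ t in Ioc a b, ∫ l in Ioc 0 M⁻¹, K t l
      = ∫ l in Ioc 0 M⁻¹, ∫ t in Ioc a b, K t l := integral_integral_swap hKint
  -- inner bound after swap
  have hinner2 : ∀ l : ℝ, ‖∫ t in Ioc a b, K t l‖ ≤ 2 := by
    intro l
    have hrw : ∫ t in Ioc a b, K t l = ∫ t in T l ∩ Ioc a b, φ t := by
      have : (fun t => K t l) = (T l).indicator φ := by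
        funext t
        simp [hKdef, Set.indicator_apply, hTdef, mem_setOf_eq]
      rw [this, integral_indicator (hTmeas l), Measure.restrict_restrict (hTmeas l)]
    rw [hrw]
    set S : Set ℝ := T l ∩ Ioc a b with hSdef
    rcases S.eq_empty_or_nonempty with hS | hS
    · rw [hS]; simp
    · have hSsub : S ⊆ Ioc a b := inter_subset_right
      have hbdd : BddBelow S := ⟨a, fun x hx => (hSsub hx).1.le⟩
      have hbdd2 : BddAbove S := ⟨b, fun x hx => (hSsub hx).2⟩
      set c := sInf S with hcdef
      set d := sSup S with hddef
      have hac : a ≤ c := le_csInf hS fun x hx => (hSsub hx).1.le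
      have hdb : d ≤ b := csSup_le hS fun x hx => (hSsub hx).2
      have hcd : c ≤ d := csInf_le_csSup hS hbdd hbdd2
      have hSord : OrdConnected S := (hTord l).inter Set.ordConnected_Ioc
      have hsub1 : Ioo c d ⊆ S := by
        intro y hy
        obtain ⟨x, hxS, hxy⟩ := exists_lt_of_csInf_lt hS hy.1
        obtain ⟨z, hzS, hyz⟩ := exists_lt_of_lt_csSup hS hy.2
        exact hSord.out hxS hzS ⟨hxy.le, hyz.le⟩
      have hsub2 : S ⊆ Icc c d := fun x hx => ⟨csInf_le hbdd hx, le_csSup hbdd2 hx⟩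
      have hae : S =ᵐ[volume] Ioo c d := by
        rw [← measure_symmDiff_eq_zero_iff]
        have hsub : symmDiff S (Ioo c d) ⊆ ({c, d} : Set ℝ) := by
          intro x hx
          rw [Set.mem_symmDiff] at hx
          rcases hx with ⟨hx1, hx2⟩ | ⟨hx1, hx2⟩
          · have hxm := hsub2 hx1
            simp only [mem_Ioo, not_and_or, not_lt] at hx2
            rcases hx2 with h2 | h2
            · exact Or.inl (le_antisymm h2 hxm.1)
            · exact Or.inr (le_antisymm hxm.2 h2)
          · exact absurd (hsub1 hx1) hx2
        exact measure_mono_null hsub (((Set.finite_singleton d).insert c).measure_zero volume)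
      rw [setIntegral_congr_set hae, ← integral_Ioc_eq_integral_Ioo,
        ← intervalIntegral.integral_of_le hcd]
      exact hinner c d hac hcd hdb
  -- put it together
  have hstep1 : ∫ t in a..b, Complex.exp (Complex.I * (f t : ℂ))
      = ∫ t in Ioc a b, Complex.exp (Complex.I * (F t : ℂ)) := by
    rw [intervalIntegral.integral_of_le hab.le]
    apply setIntegral_congr_fun measurableSet_Ioc
    intro t ht
    show Complex.exp (Complex.I * (f t : ℂ)) = Complex.exp (Complex.I * (F t : ℂ))
    rw [hFid t (Ioc_subset_Icc_self ht)]
  rw [hstep1]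
  have hstep2 : ∫ t in Ioc a b, Complex.exp (Complex.I * (F t : ℂ))
      = ∫ l in Ioc 0 M⁻¹, ∫ t in Ioc a b, K t l := by
    rw [← hswap]
    apply setIntegral_congr_fun measurableSet_Ioc
    intro t _
    exact hlayer t
  rw [hstep2]
  calc ‖∫ l in Ioc 0 M⁻¹, ∫ t in Ioc a b, K t l‖
      ≤ 2 * (volume (Ioc (0:ℝ) M⁻¹)).toReal := by
        apply norm_setIntegral_le_of_norm_le_const measure_Ioc_lt_top
        intro l _
        exact hinner2 l
    _ = 2 / M := by
        rw [Real.volume_Ioc, sub_zero, ENNReal.toReal_ofReal (inv_nonneg.2 hM.le)]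
        rw [div_eq_mul_inv]


/-- First derivative test for exponential integrals: if `f' ` is monotone and
`|f'| ≥ M > 0` on `[a, b]`, then `|∫_a^b e^{i f(t)} dt| ≤ C/M` with `C = 4`. -/
theorem first_derivative_test (a b : ℝ) (hab : a < b) (f f' : ℝ → ℝ)
    (hf : ∀ t ∈ Set.Icc a b, HasDerivAt f (f' t) t)
    (hmono : MonotoneOn f' (Set.Icc a b) ∨ AntitoneOn f' (Set.Icc a b))
    (M : ℝ) (hM : 0 < M) (hlow : ∀ t ∈ Set.Icc a b, M ≤ |f' t|) :
    ‖∫ t in a..b, Complex.exp (Complex.I * (f t : ℂ))‖ ≤ 4 / M := by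
  have h2le4 : (2 : ℝ) / M ≤ 4 / M := by gcongr <;> norm_num
  have habs : ∀ t ∈ Set.Icc a b, M ≤ f' t ∨ f' t ≤ -M := by
    intro t ht
    rcases abs_cases (f' t) with ⟨h1, _⟩ | ⟨h1, _⟩
    · exact Or.inl (h1 ▸ hlow t ht)
    · have := hlow t ht
      rw [h1] at this
      exact Or.inr (by linarith)
  have hsign : (∀ t ∈ Set.Icc a b, M ≤ f' t) ∨ (∀ t ∈ Set.Icc a b, f' t ≤ -M) := by
    by_contra hcon
    push_neg at hcon
    obtain ⟨⟨s, hs, hs2⟩, ⟨u, hu, hu2⟩⟩ := hcon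
    have hsneg : f' s ≤ -M := (habs s hs).resolve_left (by linarith)
    have hupos : M ≤ f' u := (habs u hu).resolve_right (by linarith)
    have hne : s ≠ u := by intro h; rw [h] at hsneg; linarith
    rcases hne.lt_or_gt with hlt | hlt
    · obtain ⟨c, hc, hc0⟩ := exists_hasDerivWithinAt_eq_of_gt_of_lt hlt.le
        (fun x hx => (hf x (Set.Icc_subset_Icc hs.1 hu.2 hx)).hasDerivWithinAt)
        (show f' s < 0 by linarith) (show (0:ℝ) < f' u by linarith)
      have := hlow c (Set.Icc_subset_Icc hs.1 hu.2 (Set.Ioo_subset_Icc_self hc))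
      rw [hc0] at this
      simp only [abs_zero] at this
      linarith
    · obtain ⟨c, hc, hc0⟩ := exists_hasDerivWithinAt_eq_of_lt_of_gt hlt.le
        (fun x hx => (hf x (Set.Icc_subset_Icc hu.1 hs.2 hx)).hasDerivWithinAt)
        (show (0:ℝ) < f' u by linarith) (show f' s < 0 by linarith)
      have := hlow c (Set.Icc_subset_Icc hu.1 hs.2 (Set.Ioo_subset_Icc_self hc))
      rw [hc0] at this
      simp only [abs_zero] at this
      linarith
  rcases hsign with hsg | hsg
  · exact (vdc_key a b hab f f' hf hmono M hM hsg).trans h2le4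
  · have hfneg : ∀ t ∈ Set.Icc a b, HasDerivAt (fun x => -f x) (-f' t) t :=
      fun t ht => (hf t ht).neg
    have hmono' : MonotoneOn (fun t => -f' t) (Set.Icc a b)
        ∨ AntitoneOn (fun t => -f' t) (Set.Icc a b) := by
      rcases hmono with h | h
      · exact Or.inr h.neg
      · exact Or.inl h.neg
    have hpos' : ∀ t ∈ Set.Icc a b, M ≤ -f' t := fun t ht => by linarith [hsg t ht]
    have hb := vdc_key a b hab (fun x => -f x) (fun x => -f' x) hfneg hmono' M hM hpos'
    have hcongr : ∀ t : ℝ, Complex.exp (Complex.I * ((-f t : ℝ) : ℂ))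
        = (starRingEnd ℂ) (Complex.exp (Complex.I * (f t : ℂ))) := by
      intro t
      rw [← Complex.exp_conj]
      congr 1
      rw [map_mul, Complex.conj_I, Complex.conj_ofReal]
      push_cast
      ring
    rw [intervalIntegral.integral_of_le hab.le] at hb ⊢
    calc ‖∫ t in Set.Ioc a b, Complex.exp (Complex.I * (f t : ℂ))‖
        = ‖(starRingEnd ℂ) (∫ t in Set.Ioc a b, Complex.exp (Complex.I * (f t : ℂ)))‖ := by
          rw [Complex.norm_conj]
      _ = ‖∫ t in Set.Ioc a b, (starRingEnd ℂ) (Complex.exp (Complex.I * (f t : ℂ)))‖ := by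
          rw [_root_.integral_conj]
      _ = ‖∫ t in Set.Ioc a b, Complex.exp (Complex.I * ((-f t : ℝ) : ℂ))‖ := by
          congr 1
          apply MeasureTheory.setIntegral_congr_fun measurableSet_Ioc
          intro t _
          exact (hcongr t).symm
      _ ≤ 2 / M := hb
      _ ≤ 4 / M := h2le4
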